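/- Let I = [0,1] and let φ₁,…,φ_m : I → ℝ be continuous functions. Let T = {t₁,…,t_k} ⊂ I be distinct points, let a₁,…,a_k ≥ 0, and let x = ∑_{i=1}^k aᵢ δ_{tᵢ}. Let x̂ be a nonnegative finite Borel measure on I satisfying ∫_I φ_j dx̂ = ∫_I φ_j dx for every j ∈ {1,…,m}. Suppose there exists b ∈ ℝ^m such that the function q = ∑_{j=1}^m b_j φ_j satisfies q(tᵢ) = 0 for every i ∈ {1,…,k} and q(t) > 0 for every t ∈ I \ T, and suppose the k × m matrix [φ_j(tᵢ)]_{i,j} has rank k. Then x̂ = x. -/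

import Mathlib

open MeasureTheory Set

lemma my_integrable_dirac (f : ℝ → ℝ) (p : ℝ) : Integrable f (Measure.dirac p) := by
  refine (integrable_const (f p)).congr ?_
  rw [Filter.eventuallyEq_iff_exists_mem]
  exact ⟨{p}, by rw [ae_dirac_eq]; simp, fun s hs => by simp_all⟩

lemma integral_atomic {k : ℕ} (f : ℝ → ℝ) (t : Fin k → ℝ) (ht : ∀ i, t i ∈ Icc (0:ℝ) 1)
    (w : Fin k → ℝ) (hw : ∀ i, 0 ≤ w i) :
    ∫ s in Icc (0:ℝ) 1, f s ∂(∑ i, ENNReal.ofReal (w i) • Measure.dirac (t i))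
      = ∑ i, w i * f (t i) := by
  classical
  have hres : (∑ i, ENNReal.ofReal (w i) • Measure.dirac (t i)).restrict (Icc (0:ℝ) 1)
      = ∑ i, ENNReal.ofReal (w i) • Measure.dirac (t i) := by
    have : ∀ i : Fin k, (ENNReal.ofReal (w i) • Measure.dirac (t i)).restrict (Icc (0:ℝ) 1)
        = ENNReal.ofReal (w i) • Measure.dirac (t i) := by
      intro i
      rw [Measure.restrict_smul, restrict_dirac' measurableSet_Icc]
      simp [ht i]
    calc (∑ i, ENNReal.ofReal (w i) • Measure.dirac (t i)).restrict (Icc (0:ℝ) 1)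
        = Measure.restrictₗ (Icc (0:ℝ) 1) (∑ i, ENNReal.ofReal (w i) • Measure.dirac (t i)) := rfl
      _ = ∑ i, Measure.restrictₗ (Icc (0:ℝ) 1) (ENNReal.ofReal (w i) • Measure.dirac (t i)) :=
          map_sum _ _ _
      _ = _ := by simp only [Measure.restrictₗ_apply, this]
  rw [hres, integral_finset_sum_measure
    (fun i _ => (my_integrable_dirac f (t i)).smul_measure ENNReal.ofReal_ne_top)]
  refine Finset.sum_congr rfl fun i _ => ?_
  rw [integral_smul_measure, integral_dirac, ENNReal.toReal_ofReal (hw i), smul_eq_mul]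

/-- **Exact recovery in the noise-free case.**
If a nonnegative measure `xhat` on `I = [0,1]` matches all the moments of the atomic measure
`x = ∑ aᵢ δ_{tᵢ}` against continuous functions `φⱼ`, a dual certificate
`q = ∑ bⱼ φⱼ` exists (vanishing on `T` and strictly positive on `I \ T`), and the matrix
`[φⱼ(tᵢ)]` has full rank `k`, then `xhat = x`. -/
theorem exact_recovery_noise_free
    (m k : ℕ) (φ : Fin m → ℝ → ℝ)
    (hφ : ∀ j, ContinuousOn (φ j) (Icc (0:ℝ) 1))
    (t : Fin k → ℝ) (ht : ∀ i, t i ∈ Icc (0:ℝ) 1)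
    (htinj : Function.Injective t)
    (a : Fin k → ℝ) (ha : ∀ i, 0 ≤ a i)
    (x : Measure ℝ)
    (hx : x = ∑ i, ENNReal.ofReal (a i) • Measure.dirac (t i))
    (xhat : Measure ℝ) [IsFiniteMeasure xhat]
    (hsupp : xhat (Icc (0:ℝ) 1)ᶜ = 0)
    (hfeas : ∀ j, ∫ s in Icc (0:ℝ) 1, φ j s ∂xhat = ∫ s in Icc (0:ℝ) 1, φ j s ∂x)
    (b : Fin m → ℝ)
    (hq_zero : ∀ i, ∑ j, b j * φ j (t i) = 0)
    (hq_pos : ∀ s ∈ Icc (0:ℝ) 1 \ range t, 0 < ∑ j, b j * φ j s)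
    (hrank : (Matrix.of fun (i : Fin k) (j : Fin m) => φ j (t i)).rank = k) :
    xhat = x := by
  classical
  set q : ℝ → ℝ := fun s => ∑ j, b j * φ j s with hq_def
  -- continuity and integrability
  have hqcont : ContinuousOn q (Icc (0:ℝ) 1) := by
    apply continuousOn_finset_sum
    intro j _
    exact (continuousOn_const.mul (hφ j))
  have hint : ∀ j, IntegrableOn (φ j) (Icc (0:ℝ) 1) xhat := fun j =>
    (hφ j).integrableOn_compact isCompact_Icc
  have hqint : IntegrableOn q (Icc (0:ℝ) 1) xhat :=
    hqcont.integrableOn_compact isCompact_Icc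
  -- moments of x
  have hmomx : ∀ j, ∫ s in Icc (0:ℝ) 1, φ j s ∂x = ∑ i, a i * φ j (t i) := by
    intro j; rw [hx]; exact integral_atomic _ t ht a ha
  -- the certificate integrates to zero against xhat
  have hiq : ∫ s in Icc (0:ℝ) 1, q s ∂xhat = 0 := by
    have h1 : ∫ s in Icc (0:ℝ) 1, q s ∂xhat = ∑ j, b j * ∫ s in Icc (0:ℝ) 1, φ j s ∂xhat := by
      rw [hq_def]
      rw [integral_finset_sum _ (fun j _ => (hint j).const_mul (b j))]
      exact Finset.sum_congr rfl fun j _ => integral_const_mul _ _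
    rw [h1]
    have h2 : ∀ j, b j * ∫ s in Icc (0:ℝ) 1, φ j s ∂xhat = ∑ i, a i * (b j * φ j (t i)) := by
      intro j
      rw [hfeas j, hmomx j, Finset.mul_sum]
      exact Finset.sum_congr rfl fun i _ => by ring
    simp_rw [h2]
    rw [Finset.sum_comm]
    simp_rw [← Finset.mul_sum, hq_zero]
    simp
  -- q nonnegative on Icc
  have hq0 : ∀ s ∈ Icc (0:ℝ) 1, 0 ≤ q s := by
    intro s hs
    by_cases hst : s ∈ range t
    · obtain ⟨i, rfl⟩ := hst
      exact le_of_eq (hq_zero i).symm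
    · exact le_of_lt (hq_pos s ⟨hs, hst⟩)
  -- hence q vanishes a.e. and xhat gives no mass off T
  have hae : q =ᵐ[xhat.restrict (Icc (0:ℝ) 1)] 0 := by
    refine (integral_eq_zero_iff_of_nonneg_ae ?_ hqint).mp hiq
    exact (ae_restrict_mem measurableSet_Icc).mono hq0
  have hnull : xhat (Icc (0:ℝ) 1 \ range t) = 0 := by
    have h1 : (xhat.restrict (Icc (0:ℝ) 1)) {s | q s ≠ 0} = 0 := by
      have := hae
      rw [Filter.EventuallyEq, ae_iff] at this
      simpa using this
    have h2 : Icc (0:ℝ) 1 \ range t ⊆ {s | q s ≠ 0} :=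
      fun s hs => ne_of_gt (hq_pos s hs)
    have h3 := measure_mono_null h2 h1
    rwa [Measure.restrict_apply' measurableSet_Icc, inter_eq_self_of_subset_left diff_subset] at h3
  have hcompl : xhat (range t)ᶜ = 0 := by
    have hsub : (range t)ᶜ ⊆ (Icc (0:ℝ) 1 \ range t) ∪ (Icc (0:ℝ) 1)ᶜ := by
      intro s hs
      by_cases h : s ∈ Icc (0:ℝ) 1
      · exact Or.inl ⟨h, hs⟩
      · exact Or.inr h
    exact le_antisymm (le_trans (measure_mono hsub)
      (le_of_eq (measure_union_null hnull hsupp))) (zero_le)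
  -- xhat is atomic on T
  set c : Fin k → ℝ := fun i => (xhat {t i}).toReal with hc_def
  have hc : ∀ i, 0 ≤ c i := fun i => ENNReal.toReal_nonneg
  have hcm : ∀ i, ENNReal.ofReal (c i) = xhat {t i} := fun i =>
    ENNReal.ofReal_toReal (measure_ne_top xhat _)
  have hrangeMeas : MeasurableSet (range t) := (Set.finite_range t).measurableSet
  have hrep : xhat = ∑ i, ENNReal.ofReal (c i) • Measure.dirac (t i) := by
    ext E hE
    have hE1 : xhat E = xhat (E ∩ range t) := by
      have h0 : xhat (E \ range t) = 0 :=
        measure_mono_null (diff_subset_compl E (range t)) hcompl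
      rw [← measure_inter_add_diff E hrangeMeas, h0, add_zero]
    have hE2 : E ∩ range t = ⋃ i, E ∩ {t i} := by
      ext s; simp [Set.range, eq_comm, and_comm]
    have hE3 : xhat (⋃ i, E ∩ {t i}) = ∑ i, xhat (E ∩ {t i}) := by
      rw [measure_iUnion ?_ (fun i => hE.inter (measurableSet_singleton _)), tsum_fintype]
      intro i i' hii'
      simp only [Function.onFun, Set.disjoint_left]
      rintro s ⟨-, hs⟩ ⟨-, hs'⟩
      exact hii' (htinj (by simp_all))
    have hE4 : ∀ i, xhat (E ∩ {t i}) = if t i ∈ E then xhat {t i} else 0 := by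
      intro i
      by_cases h : t i ∈ E
      · rw [if_pos h, inter_eq_self_of_subset_right (singleton_subset_iff.mpr h)]
      · rw [if_neg h]
        have hemp : E ∩ {t i} = ∅ := by
          ext s
          simp only [mem_inter_iff, mem_singleton_iff, mem_empty_iff_false, iff_false, not_and]
          rintro hsE rfl; exact h hsE
        rw [hemp, measure_empty]
    rw [hE1, hE2, hE3]
    rw [Measure.finset_sum_apply]
    refine Finset.sum_congr rfl fun i _ => ?_
    rw [hE4 i, Measure.smul_apply, Measure.dirac_apply' _ hE, hcm i]
    by_cases h : t i ∈ E <;> simp [h, indicator_apply]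
  -- matching moments force equal weights
  have hmom : ∀ j, ∑ i, c i * φ j (t i) = ∑ i, a i * φ j (t i) := by
    intro j
    have h := hfeas j
    rw [hmomx j, hrep, integral_atomic _ t ht c hc] at h
    exact h
  -- rank argument
  set M : Matrix (Fin k) (Fin m) ℝ := Matrix.of fun i j => φ j (t i) with hM_def
  have hker : ∀ v : Fin k → ℝ, M.transpose.mulVec v = 0 → v = 0 := by
    intro v hv
    have hrT : M.transpose.rank = k := by rw [Matrix.rank_transpose]; exact hrank
    have hrn := LinearMap.finrank_range_add_finrank_ker (M.transpose.mulVecLin)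
    rw [Matrix.rank] at hrT
    rw [hrT, Module.finrank_fin_fun] at hrn
    have hk0 : Module.finrank ℝ (LinearMap.ker M.transpose.mulVecLin) = 0 := by omega
    have hbot : LinearMap.ker M.transpose.mulVecLin = ⊥ :=
      Submodule.finrank_eq_zero.mp hk0
    have hvmem : v ∈ LinearMap.ker M.transpose.mulVecLin := by
      rw [LinearMap.mem_ker, Matrix.mulVecLin_apply]; exact hv
    rw [hbot] at hvmem
    simpa using hvmem
  have hca : c = a := by
    have hv : M.transpose.mulVec (c - a) = 0 := by
      funext j
      simp only [Matrix.mulVec, dotProduct, Matrix.transpose_apply, hM_def,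
        Matrix.of_apply, Pi.sub_apply, Pi.zero_apply]
      have : ∑ i, φ j (t i) * (c i - a i) = ∑ i, c i * φ j (t i) - ∑ i, a i * φ j (t i) := by
        rw [← Finset.sum_sub_distrib]
        exact Finset.sum_congr rfl fun i _ => by ring
      rw [this, hmom j, sub_self]
    have := hker (c - a) hv
    funext i
    have := congrFun this i
    simp only [Pi.sub_apply, Pi.zero_apply] at this
    linarith
  rw [hrep, hca, hx]
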